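/- arXiv:1509.05566 — 2 statements merged into one kernel-verified Lean document; each statement's English description precedes it below -/
import Mathlib

section
/- Let d ≥ 1, p ≥ 0, m ≥ 2 and set C_s := 2^{m-2}(2p+1), C̃ := 1/2 + 2C_s/(1 - 2^{1-m}), C := √d·C̃. Let Q, Q₀, Q₁, …, Q_J be points in ℝ^d with levels ℓ(Q) = ℓ(Q₀)+1 and ℓ(Q_j) = ℓ(Q₀) + j(m-1). Suppose dist(Q,Q₀) = 2^{-ℓ(Q)}·(√d/2) and dist(Q_{j-1},Q_j) ≤ 2^{-ℓ(Q_j)-1}·√d·C_s for all 1 ≤ j ≤ J. Then dist(Q, Q_J) ≤ 2^{-ℓ(Q)}·C. -/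
/-- Abstract version of Lemma 3.2: if `Q` is at distance `2^{-ℓ(Q)}·√d/2` from `Q₀`
and the chain `Q₀,…,Q_J` satisfies `dist(Q_{j-1},Q_j) ≤ 2^{-ℓ(Q_j)-1}·√d·C_s`
with `ℓ(Q_j) = ℓ(Q₀)+j(m-1)`, then `dist(Q,Q_J) ≤ 2^{-ℓ(Q)}·C`. -/
theorem refrec_chain_distance (d p m : ℕ) (hd : 1 ≤ d) (hm : 2 ≤ m) (J : ℕ)
    (Q : EuclideanSpace ℝ (Fin d)) (Qc : ℕ → EuclideanSpace ℝ (Fin d))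
    (ℓQ : ℤ) (ℓ : ℕ → ℤ) (ℓ0 : ℤ)
    (hℓQ : ℓQ = ℓ0 + 1) (hℓ : ∀ j, ℓ j = ℓ0 + j * ((m : ℤ) - 1))
    (hQ : dist Q (Qc 0) = (2 : ℝ) ^ (-ℓQ) * (Real.sqrt d / 2))
    (hchain : ∀ j, 1 ≤ j → j ≤ J →
      dist (Qc (j - 1)) (Qc j) ≤
        (2 : ℝ) ^ (-(ℓ j) - 1) * (Real.sqrt d * ((2 : ℝ) ^ ((m : ℤ) - 2) * (2 * (p : ℝ) + 1)))) :
    dist Q (Qc J) ≤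
      (2 : ℝ) ^ (-ℓQ) *
        (Real.sqrt d *
          (1 / 2 + 2 * ((2 : ℝ) ^ ((m : ℤ) - 2) * (2 * (p : ℝ) + 1)) /
            (1 - (2 : ℝ) ^ (1 - (m : ℤ))))) := by
  set Cs : ℝ := (2 : ℝ) ^ ((m : ℤ) - 2) * (2 * (p : ℝ) + 1) with hCsdef
  set r : ℝ := (2 : ℝ) ^ (1 - (m : ℤ)) with hrdef
  have hr0 : 0 < r := zpow_pos (by norm_num) _
  have hr12 : r ≤ 1 / 2 := by
    have : (2 : ℝ) ^ (1 - (m : ℤ)) ≤ (2 : ℝ) ^ (-1 : ℤ) := by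
      apply zpow_le_zpow_right₀ (by norm_num)
      omega
    simpa [hrdef] using this
  have hr1 : r < 1 := by linarith
  have hCs0 : 0 ≤ Cs := by positivity
  have hd0 : (0 : ℝ) ≤ Real.sqrt d := Real.sqrt_nonneg _
  have hpow : ∀ n : ℕ, (2 : ℝ) ^ (-(ℓ n) - 1) = (2 : ℝ) ^ (-ℓQ) * r ^ n := by
    intro n
    rw [hℓ n, hℓQ, hrdef, ← zpow_natCast ((2 : ℝ) ^ (1 - (m : ℤ))) n, ← zpow_mul,
      ← zpow_add₀ (by norm_num : (2 : ℝ) ≠ 0)]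
    congr 1
    ring
  have hterm : ∀ i ∈ Finset.range J,
      dist (Qc i) (Qc (i + 1)) ≤ (2 : ℝ) ^ (-ℓQ) * (Real.sqrt d * Cs) * (r * r ^ i) := by
    intro i hi
    have hij : i + 1 ≤ J := Finset.mem_range.mp hi
    have h := hchain (i + 1) (Nat.le_add_left 1 i) hij
    simp only [Nat.add_sub_cancel] at h
    calc dist (Qc i) (Qc (i + 1)) ≤ (2 : ℝ) ^ (-(ℓ (i + 1)) - 1) * (Real.sqrt d * Cs) := h
      _ = (2 : ℝ) ^ (-ℓQ) * (Real.sqrt d * Cs) * (r * r ^ i) := by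
          rw [hpow, pow_succ]; ring
  set S : ℝ := ∑ i ∈ Finset.range J, r ^ i with hSdef
  have hS0 : 0 ≤ S := Finset.sum_nonneg fun i _ => pow_nonneg hr0.le i
  have hSle : S ≤ (1 - r)⁻¹ := by
    refine le_trans (Summable.sum_le_tsum (Finset.range J) (fun i _ => pow_nonneg hr0.le i)
      (summable_geometric_of_lt_one hr0.le hr1)) ?_
    exact le_of_eq (tsum_geometric_of_lt_one hr0.le hr1)
  have h1r : (0 : ℝ) < 1 - r := by linarith
  have key : Cs * (r * S) ≤ 2 * Cs / (1 - r) := by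
    rw [div_eq_mul_inv]
    have h1 : (0 : ℝ) ≤ (1 - r)⁻¹ := inv_nonneg.mpr h1r.le
    have h2 : r * S ≤ r * (1 - r)⁻¹ := by
      apply mul_le_mul_of_nonneg_left hSle hr0.le
    have h3 : r * (1 - r)⁻¹ ≤ 2 * (1 - r)⁻¹ := by nlinarith
    nlinarith
  have hA : (0 : ℝ) ≤ (2 : ℝ) ^ (-ℓQ) := by positivity
  calc dist Q (Qc J)
      ≤ dist Q (Qc 0) + dist (Qc 0) (Qc J) := dist_triangle _ _ _
    _ ≤ dist Q (Qc 0) + ∑ i ∈ Finset.range J, dist (Qc i) (Qc (i + 1)) := by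
        exact add_le_add_right (dist_le_range_sum_dist Qc J) _
    _ ≤ (2 : ℝ) ^ (-ℓQ) * (Real.sqrt d / 2) +
          ∑ i ∈ Finset.range J, (2 : ℝ) ^ (-ℓQ) * (Real.sqrt d * Cs) * (r * r ^ i) := by
        rw [hQ]
        exact add_le_add_right (Finset.sum_le_sum hterm) _
    _ = (2 : ℝ) ^ (-ℓQ) * (Real.sqrt d / 2 + Real.sqrt d * (Cs * (r * S))) := by
        rw [hSdef, ← Finset.mul_sum, ← Finset.mul_sum]
        ring
    _ ≤ (2 : ℝ) ^ (-ℓQ) * (Real.sqrt d * (1 / 2 + 2 * Cs / (1 - r))) := by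
        apply mul_le_mul_of_nonneg_left _ hA
        have := mul_le_mul_of_nonneg_left key hd0
        nlinarith
end

section
/- Let Q_1 and Q_2 be finite partitions of a set D obtained by dyadic refinement from a common initial partition Q_0 (that is, every element of Q_1 and Q_2 is a dyadic descendant of, or equal to, an element of Q_0). Then the overlay Q_* (the coarsest common refinement, whose elements are those elements of Q_1 ∪ Q_2 that are minimal with respect to inclusion) satisfies #Q_* ≤ #Q_1 + #Q_2 − #Q_0. -/
/-- The (half-open) region of a dyadic cube of level `c.1` with integer index `c.2`. -/
def dyadicRegion (d : ℕ) (c : ℕ × (Fin d → ℤ)) : Set (Fin d → ℝ) :=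
  {x | ∀ i, (c.2 i : ℝ) / 2 ^ c.1 ≤ x i ∧ x i < ((c.2 i : ℝ) + 1) / 2 ^ c.1}

/-- `Q` is a partition of `D` by dyadic cubes. -/
def IsDyadicPartition (d : ℕ) (D : Set (Fin d → ℝ)) (Q : Finset (ℕ × (Fin d → ℤ))) : Prop :=
  (⋃ c ∈ Q, dyadicRegion d c) = D ∧
    ∀ c ∈ Q, ∀ c' ∈ Q, c ≠ c' → Disjoint (dyadicRegion d c) (dyadicRegion d c')

lemma dr_corner_mem (d : ℕ) (c : ℕ × (Fin d → ℤ)) :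
    (fun i => (c.2 i : ℝ) / 2 ^ c.1) ∈ dyadicRegion d c := by
  intro i
  have h2 : (0:ℝ) < 2 ^ c.1 := by positivity
  exact ⟨le_refl _, by apply div_lt_div_of_pos_right (by linarith) h2⟩

lemma dr_nonempty (d : ℕ) (c : ℕ × (Fin d → ℤ)) : (dyadicRegion d c).Nonempty :=
  ⟨_, dr_corner_mem d c⟩

lemma ico_subset_aux {m c : ℕ} {k k' : ℤ} {t : ℝ}
    (h1 : (k:ℝ)/2^(m+c) ≤ t) (h2 : t < ((k:ℝ)+1)/2^(m+c))
    (h3 : (k':ℝ)/2^m ≤ t) (h4 : t < ((k':ℝ)+1)/2^m) :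
    (k':ℝ)/2^m ≤ (k:ℝ)/2^(m+c) ∧ ((k:ℝ)+1)/2^(m+c) ≤ ((k':ℝ)+1)/2^m := by
  have hm : (0:ℝ) < 2^m := by positivity
  have hc : (0:ℝ) < 2^c := by positivity
  have hn : (0:ℝ) < 2^(m+c) := by positivity
  have e : (2:ℝ)^(m+c) = 2^m * 2^c := pow_add 2 m c
  have A : (k':ℝ) * 2^c < (k:ℝ) + 1 := by
    have h := lt_of_le_of_lt h3 h2
    rw [div_lt_div_iff₀ hm hn, e] at h
    nlinarith
  have B : (k:ℝ) < ((k':ℝ)+1) * 2^c := by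
    have h := lt_of_le_of_lt h1 h4
    rw [div_lt_div_iff₀ hn hm, e] at h
    nlinarith
  have A' : k' * 2^c ≤ k := by
    have hlt : k' * 2^c < k + 1 := by exact_mod_cast (show ((k' * 2^c : ℤ) : ℝ) < (k:ℝ) + 1 by push_cast; linarith)
    exact Int.lt_add_one_iff.mp hlt
  have B' : k + 1 ≤ (k'+1) * 2^c := by
    have hlt : k < (k'+1) * 2^c := by exact_mod_cast (show (k:ℝ) < (((k'+1) * 2^c : ℤ) : ℝ) by push_cast; linarith)
    exact Int.add_one_le_iff.mpr hlt
  constructor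
  · rw [div_le_div_iff₀ hm hn, e]
    have : ((k' * 2^c : ℤ) : ℝ) ≤ (k:ℝ) := by exact_mod_cast A'
    push_cast at this
    nlinarith
  · rw [div_le_div_iff₀ hn hm, e]
    have : ((k:ℝ)) + 1 ≤ (((k'+1) * 2^c : ℤ) : ℝ) := by exact_mod_cast B'
    push_cast at this
    nlinarith

lemma dr_subset_of_level_le {d : ℕ} {c c' : ℕ × (Fin d → ℤ)} (hle : c'.1 ≤ c.1)
    {x : Fin d → ℝ} (hx : x ∈ dyadicRegion d c) (hx' : x ∈ dyadicRegion d c') :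
    dyadicRegion d c ⊆ dyadicRegion d c' := by
  obtain ⟨n, k⟩ := c
  obtain ⟨m, k'⟩ := c'
  simp only at hle
  obtain ⟨e, rfl⟩ : ∃ e, n = m + e := ⟨n - m, by omega⟩
  intro y hy i
  obtain ⟨h1, h2⟩ := hx i
  obtain ⟨h3, h4⟩ := hx' i
  obtain ⟨H1, H2⟩ := ico_subset_aux h1 h2 h3 h4
  obtain ⟨g1, g2⟩ := hy i
  exact ⟨le_trans H1 g1, lt_of_lt_of_le g2 H2⟩

lemma dr_nested {d : ℕ} {c c' : ℕ × (Fin d → ℤ)}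
    {x : Fin d → ℝ} (hx : x ∈ dyadicRegion d c) (hx' : x ∈ dyadicRegion d c') :
    dyadicRegion d c ⊆ dyadicRegion d c' ∨ dyadicRegion d c' ⊆ dyadicRegion d c := by
  rcases le_total c'.1 c.1 with h | h
  · exact Or.inl (dr_subset_of_level_le h hx hx')
  · exact Or.inr (dr_subset_of_level_le h hx' hx)

lemma dr_coord_subset {d : ℕ} {c c' : ℕ × (Fin d → ℤ)}
    (h : dyadicRegion d c ⊆ dyadicRegion d c') (i : Fin d) :
    Set.Ico ((c.2 i : ℝ) / 2 ^ c.1) (((c.2 i : ℝ) + 1) / 2 ^ c.1) ⊆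
      Set.Ico ((c'.2 i : ℝ) / 2 ^ c'.1) (((c'.2 i : ℝ) + 1) / 2 ^ c'.1) := by
  intro t ht
  classical
  set x : Fin d → ℝ := fun j => if j = i then t else (c.2 j : ℝ) / 2 ^ c.1 with hxdef
  have hx : x ∈ dyadicRegion d c := by
    intro j
    by_cases hj : j = i
    · subst hj; simpa [x] using ht
    · simpa [x, hj] using dr_corner_mem d c j
  have := h hx i
  simpa [x] using this

lemma dr_injective {d : ℕ} (hd : 1 ≤ d) {c c' : ℕ × (Fin d → ℤ)}
    (h : dyadicRegion d c = dyadicRegion d c') : c = c' := by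
  have key : ∀ i : Fin d, c.1 = c'.1 ∧ c.2 i = c'.2 i := by
    intro i
    have h1 := dr_coord_subset (le_of_eq h) i
    have h2 := dr_coord_subset (le_of_eq h.symm) i
    have hpos : (0:ℝ) < 2 ^ c.1 := by positivity
    have hpos' : (0:ℝ) < 2 ^ c'.1 := by positivity
    have hlt : (c.2 i : ℝ) / 2 ^ c.1 < ((c.2 i : ℝ) + 1) / 2 ^ c.1 :=
      div_lt_div_of_pos_right (by linarith) hpos
    have hlt' : (c'.2 i : ℝ) / 2 ^ c'.1 < ((c'.2 i : ℝ) + 1) / 2 ^ c'.1 :=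
      div_lt_div_of_pos_right (by linarith) hpos'
    obtain ⟨a1, b1⟩ := (Set.Ico_subset_Ico_iff hlt).mp h1
    obtain ⟨a2, b2⟩ := (Set.Ico_subset_Ico_iff hlt').mp h2
    have ea : (c.2 i : ℝ) / 2 ^ c.1 = (c'.2 i : ℝ) / 2 ^ c'.1 := le_antisymm a2 a1
    have eb : ((c.2 i : ℝ) + 1) / 2 ^ c.1 = ((c'.2 i : ℝ) + 1) / 2 ^ c'.1 := le_antisymm b1 b2
    have hpow : (2:ℝ) ^ c.1 = 2 ^ c'.1 := by
      field_simp at ea eb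
      nlinarith
    have hn : c.1 = c'.1 := by
      refine Nat.pow_right_injective (le_refl 2) ?_
      exact_mod_cast hpow
    refine ⟨hn, ?_⟩
    rw [hn] at ea
    field_simp at ea
    exact_mod_cast ea
  have i0 : Fin d := ⟨0, hd⟩
  have hn := (key i0).1
  have hk : c.2 = c'.2 := funext fun i => (key i).2
  exact Prod.ext hn hk

/-- Overlay estimate: if `Q₁` and `Q₂` are dyadic partitions of `D` refining a common
dyadic partition `Q₀`, then the overlay `Q_*` (the inclusion-minimal elements of
`Q₁ ∪ Q₂`) satisfies `#Q_* ≤ #Q₁ + #Q₂ − #Q₀`. -/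
theorem overlay_card_estimate (d : ℕ) (hd : 1 ≤ d) (D : Set (Fin d → ℝ))
    (Q0 Q1 Q2 : Finset (ℕ × (Fin d → ℤ)))
    (h0 : IsDyadicPartition d D Q0) (h1 : IsDyadicPartition d D Q1)
    (h2 : IsDyadicPartition d D Q2)
    (hdesc1 : ∀ c ∈ Q1, ∃ c0 ∈ Q0, dyadicRegion d c ⊆ dyadicRegion d c0)
    (hdesc2 : ∀ c ∈ Q2, ∃ c0 ∈ Q0, dyadicRegion d c ⊆ dyadicRegion d c0)
    (Qstar : Finset (ℕ × (Fin d → ℤ)))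
    (hstar : ∀ c, c ∈ Qstar ↔ c ∈ Q1 ∪ Q2 ∧
      ∀ c' ∈ Q1 ∪ Q2, dyadicRegion d c' ⊆ dyadicRegion d c →
        dyadicRegion d c' = dyadicRegion d c) :
    (Qstar.card : ℤ) ≤ (Q1.card : ℤ) + Q2.card - Q0.card := by
  classical
  obtain ⟨hcov0, hdis0⟩ := h0
  obtain ⟨hcov1, hdis1⟩ := h1
  obtain ⟨hcov2, hdis2⟩ := h2
  -- finding an element of a refining partition below a given Q0 cube, containing x
  have find : ∀ (Q : Finset (ℕ × (Fin d → ℤ))),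
      (⋃ c ∈ Q, dyadicRegion d c) = D →
      (∀ c ∈ Q, ∃ c0 ∈ Q0, dyadicRegion d c ⊆ dyadicRegion d c0) →
      ∀ c0 ∈ Q0, ∀ x ∈ dyadicRegion d c0,
        ∃ c ∈ Q, x ∈ dyadicRegion d c ∧ dyadicRegion d c ⊆ dyadicRegion d c0 := by
    intro Q hcov hdesc c0 hc0 x hx
    have hxD : x ∈ D := by
      rw [← hcov0]
      exact Set.mem_biUnion hc0 hx
    rw [← hcov] at hxD
    obtain ⟨c, hc, hxc⟩ := Set.mem_iUnion₂.mp hxD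
    refine ⟨c, hc, hxc, ?_⟩
    rcases dr_nested hxc hx with hsub | hsup
    · exact hsub
    · obtain ⟨c0', hc0', hsub'⟩ := hdesc c hc
      have hx0' : x ∈ dyadicRegion d c0' := hsub' hxc
      have : c0 = c0' := by
        by_contra hne
        exact (hdis0 c0 hc0 c0' hc0' hne).ne_of_mem hx hx0' rfl
      rw [this]
      exact hsub'
  -- witness for each c0
  have witness : ∀ c0 : {c0 // c0 ∈ Q0}, ∃ w,
      dyadicRegion d w ⊆ dyadicRegion d c0.1 ∧
      (w ∈ Q1 \ Qstar ∨ w ∈ Q2 \ Qstar ∨ w ∈ (Q1 ∩ Q2) ∩ Qstar) := by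
    rintro ⟨c0, hc0⟩
    obtain ⟨x, hx⟩ := dr_nonempty d c0
    obtain ⟨c1, hc1, hxc1, hsub1⟩ := find Q1 hcov1 hdesc1 c0 hc0 x hx
    by_cases hs1 : c1 ∈ Qstar
    · obtain ⟨c2, hc2, hxc2, hsub2⟩ := find Q2 hcov2 hdesc2 c0 hc0 x hx
      by_cases hs2 : c2 ∈ Qstar
      · have heq : dyadicRegion d c1 = dyadicRegion d c2 := by
          rcases dr_nested hxc1 hxc2 with hsub | hsup
          · exact ((hstar c2).mp hs2).2 c1 (Finset.mem_union_left _ hc1) hsub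
          · exact (((hstar c1).mp hs1).2 c2 (Finset.mem_union_right _ hc2) hsup).symm
        have : c1 = c2 := dr_injective hd heq
        subst this
        exact ⟨c1, hsub1, Or.inr (Or.inr (by
          simp [Finset.mem_inter, hc1, hc2, hs1]))⟩
      · exact ⟨c2, hsub2, Or.inr (Or.inl (Finset.mem_sdiff.mpr ⟨hc2, hs2⟩))⟩
    · exact ⟨c1, hsub1, Or.inl (Finset.mem_sdiff.mpr ⟨hc1, hs1⟩)⟩
  choose w hwsub hwor using witness
  set S1 := Q1 \ Qstar with hS1
  set S2 := Q2 \ Qstar with hS2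
  set S3 := (Q1 ∩ Q2) ∩ Qstar with hS3
  -- w is injective
  have hwinj : Function.Injective w := by
    rintro a b hab
    have hne : (dyadicRegion d (w a)).Nonempty := dr_nonempty d _
    obtain ⟨x, hx⟩ := hne
    have hxa : x ∈ dyadicRegion d a.1 := hwsub a hx
    have hxb : x ∈ dyadicRegion d b.1 := by rw [hab] at hx; exact hwsub b hx
    have : a.1 = b.1 := by
      by_contra hne'
      exact (hdis0 a.1 a.2 b.1 b.2 hne').ne_of_mem hxa hxb rfl
    exact Subtype.ext this
  -- injection into sum
  let extract : {c // c ∈ S1} ⊕ {c // c ∈ S2} ⊕ {c // c ∈ S3} → ℕ × (Fin d → ℤ) :=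
    Sum.elim (·.1) (Sum.elim (·.1) (·.1))
  let f : {c0 // c0 ∈ Q0} → {c // c ∈ S1} ⊕ {c // c ∈ S2} ⊕ {c // c ∈ S3} :=
    fun a => if h1 : w a ∈ S1 then Sum.inl ⟨w a, h1⟩
      else if h2 : w a ∈ S2 then Sum.inr (Sum.inl ⟨w a, h2⟩)
      else Sum.inr (Sum.inr ⟨w a, by
        rcases hwor a with h | h | h
        · exact absurd h h1
        · exact absurd h h2
        · exact h⟩)
  have hfw : ∀ a, extract (f a) = w a := by
    intro a
    simp only [f]
    split_ifs <;> rfl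
  have hfinj : Function.Injective f := by
    intro a b hab
    apply hwinj
    rw [← hfw a, ← hfw b, hab]
  have hcard : Q0.card ≤ S1.card + S2.card + S3.card := by
    have := Fintype.card_le_of_injective f hfinj
    simpa [Fintype.card_coe, add_assoc] using this
  -- inclusion-exclusion
  have hsubstar : Qstar ⊆ Q1 ∪ Q2 := fun c hc => ((hstar c).mp hc).1
  have hA : (Q1 ∩ Qstar).card + S1.card = Q1.card :=
    Finset.card_inter_add_card_sdiff Q1 Qstar
  have hB : (Q2 ∩ Qstar).card + S2.card = Q2.card :=
    Finset.card_inter_add_card_sdiff Q2 Qstar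
  have hunion : (Q1 ∩ Qstar) ∪ (Q2 ∩ Qstar) = Qstar := by
    ext c
    simp only [Finset.mem_union, Finset.mem_inter]
    constructor
    · rintro (⟨_, h⟩ | ⟨_, h⟩) <;> exact h
    · intro hc
      rcases Finset.mem_union.mp (hsubstar hc) with h | h
      · exact Or.inl ⟨h, hc⟩
      · exact Or.inr ⟨h, hc⟩
  have hinter : (Q1 ∩ Qstar) ∩ (Q2 ∩ Qstar) = S3 := by
    ext c
    simp only [hS3, Finset.mem_inter]
    tauto
  have hie : Qstar.card + S3.card = (Q1 ∩ Qstar).card + (Q2 ∩ Qstar).card := by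
    have h := Finset.card_union_add_card_inter (Q1 ∩ Qstar) (Q2 ∩ Qstar)
    rw [hunion, hinter] at h
    exact h
  omega
end
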